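/- Let R be a unique factorization domain with field of fractions K. Then R is a D-ring if and only if: for all f(x), g(x) in R[x] with g(x) nonconstant and primitive such that for every k ∈ R with g(k) ≠ 0 one has g(k) divides f(k) in R, it follows that g(x) divides f(x) in R[x]. -/

import Mathlib

open Polynomial

/-- An integral domain `R` is a *D-ring* if for all polynomials `f, g ∈ R[x]` such that
`g(k) ∣ f(k)` in `R` for all but finitely many `k ∈ R`, there is a polynomial `q` over the
field of fractions of `R` with `f = q * g` in `K[x]`. -/
def IsDRing (R : Type*) [CommRing R] [IsDomain R] : Prop :=
  ∀ f g : Polynomial R,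
    (∀ᶠ k in Filter.cofinite, g.eval k ∣ f.eval k) →
    ∃ q : Polynomial (FractionRing R),
      f.map (algebraMap R (FractionRing R)) = q * g.map (algebraMap R (FractionRing R))

theorem isDRing_iff_primitive_dvd
    (R : Type*) [CommRing R] [IsDomain R] [UniqueFactorizationMonoid R] :
    IsDRing R ↔
      ∀ f g : Polynomial R, 1 ≤ g.degree → g.IsPrimitive →
        (∀ k : R, g.eval k ≠ 0 → g.eval k ∣ f.eval k) → g ∣ f := by
  letI : NormalizationMonoid R := UniqueFactorizationMonoid.normalizationMonoid.toNormalizationMonoid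
  letI : NormalizedGCDMonoid R := UniqueFactorizationMonoid.toNormalizedGCDMonoid R
  have hinj : Function.Injective (algebraMap R (FractionRing R)) :=
    IsFractionRing.injective R (FractionRing R)
  set φ := algebraMap R (FractionRing R) with hφ
  classical
  constructor
  · -- IsDRing → primitive divisibility property
    intro hD f g hdeg hprim hdvd
    have hg0 : g ≠ 0 := by
      intro h
      rw [h, degree_zero] at hdeg
      simp at hdeg
    have hcof : ∀ᶠ k in Filter.cofinite, g.eval k ∣ f.eval k := by
      rw [Filter.eventually_cofinite]
      apply (finite_setOf_isRoot hg0).subset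
      intro k hk
      simp only [Set.mem_setOf_eq] at hk ⊢
      by_contra h
      exact hk (hdvd k h)
    obtain ⟨q, hq⟩ := hD f g hcof
    by_cases hf : f = 0
    · simp [hf]
    · rw [← hprim.dvd_primPart_iff_dvd hf]
      apply hprim.dvd_of_fraction_map_dvd_fraction_map (K := FractionRing R)
      have hc : φ f.content ≠ 0 := by
        intro h
        exact hf (content_eq_zero_iff.mp (hinj (by rw [map_zero]; exact h)))
      have h1 : C (φ f.content) * f.primPart.map φ = q * g.map φ := by
        rw [← Polynomial.map_C, ← Polynomial.map_mul, ← eq_C_content_mul_primPart, hq]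
      refine ⟨C (φ f.content)⁻¹ * q, ?_⟩
      have h2 : f.primPart.map φ = C (φ f.content)⁻¹ * (q * g.map φ) := by
        rw [← h1, ← mul_assoc, ← C_mul, inv_mul_cancel₀ hc, C_1, one_mul]
      rw [h2]; ring
  · -- primitive divisibility property → IsDRing
    intro hP f g hcof
    cases finite_or_infinite R with
    | inl hfin =>
      exfalso
      have : Fintype R := Fintype.ofFinite R
      set g0 : R[X] := ∏ a : R, (X - C a) with hg0def
      have hmonic : g0.Monic := monic_prod_of_monic _ _ fun a _ => monic_X_sub_C a
      have hdegpos : 0 < g0.natDegree := by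
        have hcard : g0.natDegree = Fintype.card R := by
          rw [hg0def, natDegree_prod _ _ fun a _ => X_sub_C_ne_zero a]
          simp
        rw [hcard]; exact Fintype.card_pos
      have heval : ∀ k : R, g0.eval k = 0 := fun k => by
        rw [hg0def, eval_prod]
        exact Finset.prod_eq_zero (Finset.mem_univ k) (by simp)
      have hd : g0 ∣ 1 :=
        hP 1 g0 (Nat.WithBot.one_le_iff_zero_lt.mpr (natDegree_pos_iff_degree_pos.mp hdegpos))
          hmonic.isPrimitive (fun k hk => absurd (heval k) hk)
      have := natDegree_eq_zero_of_isUnit (isUnit_of_dvd_one hd)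
      omega
    | inr hinf =>
      have hB : {k : R | ¬ g.eval k ∣ f.eval k}.Finite := Filter.eventually_cofinite.mp hcof
      by_cases hg : g = 0
      · have hf' : {k : R | f.eval k ≠ 0}.Finite := by
          apply hB.subset
          intro k hk
          simp only [Set.mem_setOf_eq] at hk ⊢
          rw [hg]
          simpa [zero_dvd_iff] using hk
        have hf : f = 0 := by
          apply eq_zero_of_infinite_isRoot
          have := hf'.infinite_compl
          convert this using 1
          ext x
          simp [IsRoot]
        exact ⟨0, by simp [hf, hg]⟩
      · by_cases hdg : g.natDegree = 0
        · -- g is a nonzero constant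
          obtain ⟨a, rfl⟩ := Polynomial.natDegree_eq_zero.mp hdg
          have ha : φ a ≠ 0 := by
            intro h
            have ha0 : a = 0 := hinj (by rw [map_zero]; exact h)
            exact hg (by rw [ha0, C_0])
          refine ⟨f.map φ * C (φ a)⁻¹, ?_⟩
          rw [Polynomial.map_C, mul_assoc, ← C_mul, inv_mul_cancel₀ ha, C_1, mul_one]
        · -- main case: g nonconstant
          set g' := g.primPart with hg'def
          have hdg1 : 1 ≤ g'.degree := by
            rw [Nat.WithBot.one_le_iff_zero_lt, ← natDegree_pos_iff_degree_pos,
              hg'def, natDegree_primPart]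
            omega
          set T : Finset R := hB.toFinset.filter (fun a => g'.eval a ≠ 0) with hTdef
          set t : R[X] := ∏ a ∈ T, (g' - C (g'.eval a)) with htdef
          have hcd : ∀ k, g'.eval k ∣ g.eval k := by
            intro k
            conv_rhs => rw [eq_C_content_mul_primPart g]
            rw [eval_mul, eval_C]
            exact Dvd.intro_left _ rfl
          have H : ∀ k : R, g'.eval k ≠ 0 → g'.eval k ∣ (f * t).eval k := by
            intro k hk
            by_cases hkB : g.eval k ∣ f.eval k
            · rw [eval_mul]
              exact ((hcd k).trans hkB).mul_right _
            · have hkT : k ∈ T := by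
                rw [hTdef, Finset.mem_filter, Set.Finite.mem_toFinset]
                exact ⟨hkB, hk⟩
              have ht0 : t.eval k = 0 := by
                rw [htdef, eval_prod]
                exact Finset.prod_eq_zero hkT (by simp)
              rw [eval_mul, ht0, mul_zero]
              exact dvd_zero _
          obtain ⟨r, hr⟩ := hP (f * t) g' hdg1 g.isPrimitive_primPart H
          have hcop : IsCoprime (g'.map φ) (t.map φ) := by
            rw [htdef, Polynomial.map_prod]
            apply IsCoprime.prod_right
            intro a ha
            have h0 : φ (g'.eval a) ≠ 0 := by
              intro h
              rw [hTdef, Finset.mem_filter] at ha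
              exact ha.2 (hinj (by rw [map_zero]; exact h))
            rw [Polynomial.map_sub, Polynomial.map_C]
            refine ⟨C (φ (g'.eval a))⁻¹, -(C (φ (g'.eval a))⁻¹), ?_⟩
            have h1 : (C (φ (g'.eval a))⁻¹ : (FractionRing R)[X]) * C (φ (g'.eval a)) = 1 := by
              rw [← C_mul, inv_mul_cancel₀ h0, C_1]
            linear_combination h1
          have hdvdK : g'.map φ ∣ f.map φ := by
            apply hcop.dvd_of_dvd_mul_right
            exact ⟨r.map φ, by rw [← Polynomial.map_mul, ← Polynomial.map_mul, hr]⟩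
          obtain ⟨q', hq'⟩ := hdvdK
          have hc0 : φ g.content ≠ 0 := by
            intro h
            exact hg (content_eq_zero_iff.mp (hinj (by rw [map_zero]; exact h)))
          have hgK : g.map φ = C (φ g.content) * g'.map φ := by
            conv_lhs => rw [eq_C_content_mul_primPart g]
            rw [Polynomial.map_mul, Polynomial.map_C]
          refine ⟨q' * C (φ g.content)⁻¹, ?_⟩
          rw [hq', hgK]
          have h1 : (C (φ g.content)⁻¹ : (FractionRing R)[X]) * C (φ g.content) = 1 := by
            rw [← C_mul, inv_mul_cancel₀ hc0, C_1]
          linear_combination (-(g'.map φ * q')) * h1
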